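/- Let f ∈ E_{(beta,mu)} with beta > 0 and mu > 1. Then the inverse Fourier transform F^{-1}(f)(x) = (2π)^{−1/2} ∫_ℝ f(m) e^{ixm} dm, defined for x ∈ ℝ, extends to a holomorphic function on the horizontal strip H_beta = {z ∈ ℂ : |Im(z)| < beta}. Moreover, if phi(m) = i·m·f(m), then phi ∈ E_{(beta,mu−1)} and the derivative of the extension satisfies ∂_z F^{-1}(f)(z) = F^{-1}(phi)(z) for all z ∈ H_beta. -/

import Mathlib

/- Statement 8: inverse Fourier transform on the spaces E_{(beta,mu)}. -/

open MeasureTheory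

noncomputable def eW (beta mu m : ℝ) : ℝ := (1 + |m|) ^ mu * Real.exp (beta * |m|)

/-- The inverse Fourier transform, extended to complex arguments. -/
noncomputable def invFourier (f : ℝ → ℂ) (z : ℂ) : ℂ :=
  (1 / Real.sqrt (2 * Real.pi) : ℝ) • ∫ m : ℝ, f m * Complex.exp (Complex.I * z * m)

/-- The horizontal strip `H_beta`. -/
def hStrip (beta : ℝ) : Set ℂ := {z : ℂ | |z.im| < beta}

lemma integrable_exp_neg_abs' {δ : ℝ} (hδ : 0 < δ) :
    Integrable (fun m : ℝ => Real.exp (-δ * |m|)) := by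
  have hIoi : IntegrableOn (fun m : ℝ => Real.exp (-δ * |m|)) (Set.Ioi 0) := by
    apply (exp_neg_integrableOn_Ioi 0 hδ).congr_fun (fun x hx => by
      rw [abs_of_pos hx]) measurableSet_Ioi
  have hIic : IntegrableOn (fun m : ℝ => Real.exp (-δ * |m|)) (Set.Iic 0) := by
    rw [← MeasureTheory.Measure.map_neg_eq_self (volume : Measure ℝ)]
    have m' : MeasurableEmbedding fun x : ℝ => -x := (Homeomorph.neg ℝ).measurableEmbedding
    rw [m'.integrableOn_map_iff]
    simp_rw [Function.comp_def, abs_neg, Set.neg_preimage, Set.neg_Iic, neg_zero]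
    exact Iff.mpr integrableOn_Ici_iff_integrableOn_Ioi hIoi
  rw [← integrableOn_univ, ← Set.Iic_union_Ioi (a := (0:ℝ))]
  exact hIic.union hIoi

lemma norm_exp_I_mul (z : ℂ) (m : ℝ) :
    ‖Complex.exp (Complex.I * z * m)‖ = Real.exp (-z.im * m) := by
  rw [Complex.norm_exp]; norm_num [Complex.mul_re]

theorem stmt_8 (beta mu : ℝ) (hbeta : 0 < beta) (hmu : 1 < mu)
    (f : ℝ → ℂ) (hf : Continuous f)
    (B : ℝ) (hB : ∀ m : ℝ, eW beta mu m * ‖f m‖ ≤ B) :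
    DifferentiableOn ℂ (invFourier f) (hStrip beta) ∧
    Continuous (fun m : ℝ => Complex.I * m * f m) ∧
    (∃ B' : ℝ, ∀ m : ℝ, eW beta (mu - 1) m * ‖Complex.I * m * f m‖ ≤ B') ∧
    ∀ z ∈ hStrip beta,
      deriv (invFourier f) z = invFourier (fun m => Complex.I * m * f m) z := by
  -- basic consequences of the bound
  have hkey : ∀ m : ℝ, (1 + |m|) * (Real.exp (beta * |m|) * ‖f m‖) ≤ B := by
    intro m
    have h1 : (1 + |m|) ≤ (1 + |m|) ^ mu := by
      nth_rewrite 1 [← Real.rpow_one (1 + |m|)]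
      exact Real.rpow_le_rpow_of_exponent_le (by linarith [abs_nonneg m]) hmu.le
    calc (1 + |m|) * (Real.exp (beta * |m|) * ‖f m‖)
        ≤ (1 + |m|) ^ mu * (Real.exp (beta * |m|) * ‖f m‖) := by
          gcongr
      _ = eW beta mu m * ‖f m‖ := by rw [eW]; ring
      _ ≤ B := hB m
  have h0 : ∀ m : ℝ, Real.exp (beta * |m|) * ‖f m‖ ≤ B := fun m =>
    le_trans (by nlinarith [abs_nonneg m, Real.exp_pos (beta * |m|),
      norm_nonneg (f m), mul_nonneg (Real.exp_pos (beta * |m|)).le (norm_nonneg (f m))]) (hkey m)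
  have h1 : ∀ m : ℝ, |m| * (Real.exp (beta * |m|) * ‖f m‖) ≤ B := fun m =>
    le_trans (by nlinarith [mul_nonneg (Real.exp_pos (beta * |m|)).le (norm_nonneg (f m))]) (hkey m)
  have hBnn : 0 ≤ B :=
    le_trans (mul_nonneg (Real.exp_pos _).le (norm_nonneg _)) (h0 0)
  -- the key derivative statement
  have main : ∀ z₀ ∈ hStrip beta,
      HasDerivAt (invFourier f) (invFourier (fun m => Complex.I * m * f m) z₀) z₀ := by
    intro z₀ hz₀
    have hz₀' : |z₀.im| < beta := hz₀
    set ε : ℝ := (beta - |z₀.im|) / 2 with hε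
    have hεpos : 0 < ε := by simp only [hε]; linarith
    set b' : ℝ := |z₀.im| + ε with hb'
    have hb'lt : b' < beta := by simp only [hb', hε]; linarith
    have him : ∀ z ∈ Metric.ball z₀ ε, |z.im| ≤ b' := by
      intro z hz
      have : |z.im - z₀.im| ≤ ‖z - z₀‖ := by
        simpa using Complex.abs_im_le_norm (z - z₀)
      have h2 : ‖z - z₀‖ < ε := by simpa [Metric.mem_ball, dist_eq_norm] using hz
      calc |z.im| ≤ |z₀.im| + |z.im - z₀.im| := by
            have := abs_sub_abs_le_abs_sub z.im z₀.im; linarith [abs_abs_sub_abs_le_abs_sub z.im z₀.im, abs_add_le z₀.im (z.im - z₀.im)]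
        _ ≤ |z₀.im| + ε := by linarith
    -- norm bounds
    have hexp : ∀ z : ℂ, ∀ m : ℝ, |z.im| ≤ b' →
        Real.exp (-z.im * m) ≤ Real.exp (beta * |m|) * Real.exp (-(beta - b') * |m|) := by
      intro z m hzb
      rw [← Real.exp_add]
      apply Real.exp_le_exp.mpr
      have : -z.im * m ≤ |z.im| * |m| := by
        calc -z.im * m ≤ |(-z.im) * m| := le_abs_self _
          _ = |z.im| * |m| := by rw [abs_mul, abs_neg]
      nlinarith [abs_nonneg m]
    have hbound : ∀ z : ℂ, ∀ m : ℝ, |z.im| ≤ b' →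
        ‖Complex.I * m * f m * Complex.exp (Complex.I * z * m)‖ ≤
          B * Real.exp (-(beta - b') * |m|) := by
      intro z m hzb
      rw [norm_mul, norm_mul, norm_mul, norm_exp_I_mul]
      simp only [Complex.norm_I, Complex.norm_real, Real.norm_eq_abs, one_mul]
      calc |m| * ‖f m‖ * Real.exp (-z.im * m)
          ≤ |m| * ‖f m‖ * (Real.exp (beta * |m|) * Real.exp (-(beta - b') * |m|)) := by
            gcongr
            exact hexp z m hzb
        _ = (|m| * (Real.exp (beta * |m|) * ‖f m‖)) * Real.exp (-(beta - b') * |m|) := by ring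
        _ ≤ B * Real.exp (-(beta - b') * |m|) := by
            gcongr; exact h1 m
    have hbound0 : ∀ z : ℂ, ∀ m : ℝ, |z.im| ≤ b' →
        ‖f m * Complex.exp (Complex.I * z * m)‖ ≤ B * Real.exp (-(beta - b') * |m|) := by
      intro z m hzb
      rw [norm_mul, norm_exp_I_mul]
      calc ‖f m‖ * Real.exp (-z.im * m)
          ≤ ‖f m‖ * (Real.exp (beta * |m|) * Real.exp (-(beta - b') * |m|)) := by
            gcongr; exact hexp z m hzb
        _ = (Real.exp (beta * |m|) * ‖f m‖) * Real.exp (-(beta - b') * |m|) := by ring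
        _ ≤ B * Real.exp (-(beta - b') * |m|) := by gcongr; exact h0 m
    have hδ : (0:ℝ) < beta - b' := by linarith
    have hint_bound : Integrable (fun m : ℝ => B * Real.exp (-(beta - b') * |m|)) :=
      (integrable_exp_neg_abs' hδ).const_mul B
    have hmeas : ∀ z : ℂ, AEStronglyMeasurable
        (fun m : ℝ => f m * Complex.exp (Complex.I * z * m)) volume := by
      intro z
      exact (hf.mul (Complex.continuous_exp.comp (by continuity))).aestronglyMeasurable
    have hmeas' : AEStronglyMeasurable
        (fun m : ℝ => Complex.I * m * f m * Complex.exp (Complex.I * z₀ * m)) volume := by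
      apply Continuous.aestronglyMeasurable
      exact ((continuous_const.mul (Complex.continuous_ofReal)).mul hf).mul
        (Complex.continuous_exp.comp (by continuity))
    have hz₀b : |z₀.im| ≤ b' := by simp only [hb']; linarith
    have hF_int : Integrable (fun m : ℝ => f m * Complex.exp (Complex.I * z₀ * m)) :=
      hint_bound.mono (hmeas z₀) (Filter.Eventually.of_forall fun m => by
        rw [Real.norm_eq_abs, abs_of_nonneg (mul_nonneg hBnn (Real.exp_pos _).le)]
        exact hbound0 z₀ m hz₀b)
    have := hasDerivAt_integral_of_dominated_loc_of_deriv_le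
      (F := fun z m => f m * Complex.exp (Complex.I * z * m))
      (F' := fun z m => Complex.I * m * f m * Complex.exp (Complex.I * z * m))
      (x₀ := z₀) (bound := fun m => B * Real.exp (-(beta - b') * |m|)) (Metric.ball_mem_nhds z₀ hεpos)
      (Filter.Eventually.of_forall fun z => hmeas z) hF_int hmeas'
      (Filter.Eventually.of_forall fun m z hz => hbound z m (him z hz))
      hint_bound
      (Filter.Eventually.of_forall fun m z hz => ?_)
    · unfold invFourier
      exact this.2.const_smul (1 / Real.sqrt (2 * Real.pi) : ℝ)
    · -- HasDerivAt (fun z => f m * exp (I z m)) (I m f m exp (I z m)) z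
      have h : HasDerivAt (fun z : ℂ => Complex.I * z * m) (Complex.I * m) z := by
        simpa using ((hasDerivAt_id z).const_mul Complex.I).mul_const (m : ℂ)
      have h2 : HasDerivAt (fun z : ℂ => Complex.exp (Complex.I * z * m))
          (Complex.exp (Complex.I * z * m) * (Complex.I * m)) z := h.cexp
      have h3 := h2.const_mul (f m)
      convert h3 using 1
      · rfl
      ring
  refine ⟨?_, ?_, ?_, ?_⟩
  · intro z hz
    exact ((main z hz).differentiableAt).differentiableWithinAt
  · exact (continuous_const.mul Complex.continuous_ofReal).mul hf
  · refine ⟨B, fun m => ?_⟩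
    rw [norm_mul, norm_mul]
    simp only [Complex.norm_I, Complex.norm_real, Real.norm_eq_abs, one_mul]
    have h1 : (1 + |m|) ^ (mu - 1) * |m| ≤ (1 + |m|) ^ (mu - 1) * (1 + |m|) := by
      gcongr
      linarith [abs_nonneg m]
    have h2 : (1 + |m|) ^ (mu - 1) * (1 + |m|) = (1 + |m|) ^ mu := by
      nth_rewrite 2 [← Real.rpow_one (1 + |m|)]
      rw [← Real.rpow_add (by linarith [abs_nonneg m])]
      norm_num
    calc eW beta (mu - 1) m * (|m| * ‖f m‖)
        = ((1 + |m|) ^ (mu - 1) * |m|) * (Real.exp (beta * |m|) * ‖f m‖) := by rw [eW]; ring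
      _ ≤ ((1 + |m|) ^ (mu - 1) * (1 + |m|)) * (Real.exp (beta * |m|) * ‖f m‖) :=
          mul_le_mul_of_nonneg_right h1 (mul_nonneg (Real.exp_pos _).le (norm_nonneg _))
      _ = (1 + |m|) ^ mu * (Real.exp (beta * |m|) * ‖f m‖) := by rw [h2]
      _ = eW beta mu m * ‖f m‖ := by rw [eW]; ring
      _ ≤ B := hB m
  · intro z hz
    exact (main z hz).deriv
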